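/- Let Y be an n×m matrix with entries in {0,1}, and let o denote the total number of ones, with o ≤ nm/2. Define V_R(Y) = Σ_j min(o_j, n − o_j) where o_j is the number of ones in column j, and V_C(Y) = Σ_i min(o_i, m − o_i) where o_i is the number of ones in row i. Then o ≤ ((1+√2)/2)·(V_R(Y) + V_C(Y)). -/

import Mathlib

open Finset

private lemma core_ineq (o W x : ℝ) (ho : 0 ≤ o) (hW : 0 ≤ W) (hx : 0 ≤ x)
    (hK : 8*o*x ≤ (W + 2*x)^2) (h2 : o ≤ W + x) (h4 : x ≤ o) :
    2 * o ≤ (1 + Real.sqrt 2) * W := by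
  have hs : Real.sqrt 2 ^ 2 = 2 := Real.sq_sqrt (by norm_num)
  have hs1 : 1 ≤ Real.sqrt 2 := by nlinarith [Real.sqrt_nonneg 2]
  have hQR : 0 ≤ (W + x - o) * (o - x) :=
    mul_nonneg (by linarith) (by linarith)
  have key : 8 * o^2 ≤ (W + 2*o)^2 := by nlinarith [hK, hQR]
  have h6 : 2 * Real.sqrt 2 * o ≤ W + 2*o := by
    by_contra h
    push_neg at h
    have h7 : (W + 2*o) * (W + 2*o) < (2 * Real.sqrt 2 * o) * (2 * Real.sqrt 2 * o) :=
      mul_self_lt_mul_self (by linarith) h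
    nlinarith [h7]
  nlinarith [mul_le_mul_of_nonneg_left h6 (by linarith : (0:ℝ) ≤ 1 + Real.sqrt 2)]

private lemma aux_main (n m : ℕ) (e : Fin n → Fin m → ℕ) (hele : ∀ i j, e i j ≤ 1)
    (o : ℕ) (hoe : o = ∑ i, ∑ j, e i j) (hhalf : 2 * o ≤ n * m) :
    2 * (o:ℝ) ≤ (1 + Real.sqrt 2) *
      (((∑ j, min (∑ i, e i j) (n - ∑ i, e i j) : ℕ) : ℝ) +
       ((∑ i, min (∑ j, e i j) (m - ∑ j, e i j) : ℕ) : ℝ)) := by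
  classical
  set r : Fin n → ℕ := fun i => ∑ j, e i j with hrd
  set c : Fin m → ℕ := fun j => ∑ i, e i j with hcd
  set VR : ℕ := ∑ j, min (c j) (n - c j) with hVR
  set VC : ℕ := ∑ i, min (r i) (m - r i) with hVC
  have hrm : ∀ i, r i ≤ m := fun i => by
    calc r i = ∑ j, e i j := rfl
      _ ≤ ∑ _j : Fin m, 1 := Finset.sum_le_sum (fun j _ => hele i j)
      _ = m := by simp
  have hcn : ∀ j, c j ≤ n := fun j => by
    calc c j = ∑ i, e i j := rfl
      _ ≤ ∑ _i : Fin n, 1 := Finset.sum_le_sum (fun i _ => hele i j)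
      _ = n := by simp
  set LR : Finset (Fin n) := Finset.univ.filter (fun i => 2 * r i ≤ m) with hLR
  set HR : Finset (Fin n) := Finset.univ.filter (fun i => ¬ (2 * r i ≤ m)) with hHR
  set LC : Finset (Fin m) := Finset.univ.filter (fun j => 2 * c j ≤ n) with hLC
  set HC : Finset (Fin m) := Finset.univ.filter (fun j => ¬ (2 * c j ≤ n)) with hHC
  set a : ℕ := HR.card with ha
  set b : ℕ := HC.card with hb
  set p : ℕ := ∑ i ∈ LR, r i with hp
  set q : ℕ := ∑ i ∈ HR, ∑ j ∈ LC, e i j with hq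
  set x : ℕ := ∑ i ∈ HR, ∑ j ∈ HC, e i j with hx
  set rlh : ℕ := ∑ i ∈ LR, ∑ j ∈ HC, e i j with hrlh
  have hsplitr : ∀ i, r i = (∑ j ∈ LC, e i j) + ∑ j ∈ HC, e i j := fun i =>
    (Finset.sum_filter_add_sum_filter_not Finset.univ (fun j => 2 * c j ≤ n) _).symm
  have hopqx : o = p + (q + x) := by
    rw [hoe, ← Finset.sum_filter_add_sum_filter_not Finset.univ (fun i => 2 * r i ≤ m)]
    congr 1
    rw [hq, hx, ← Finset.sum_add_distrib]
    exact Finset.sum_congr rfl (fun i _ => hsplitr i)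
  have hVCsplit : VC = p + ∑ i ∈ HR, min (r i) (m - r i) := by
    rw [hVC, ← Finset.sum_filter_add_sum_filter_not Finset.univ (fun i => 2 * r i ≤ m)]
    congr 1
    refine Finset.sum_congr rfl (fun i hi => ?_)
    have h1 := (Finset.mem_filter.mp hi).2
    omega
  have hVRsplit : VR = (∑ j ∈ LC, c j) + ∑ j ∈ HC, min (c j) (n - c j) := by
    rw [hVR, ← Finset.sum_filter_add_sum_filter_not Finset.univ (fun j => 2 * c j ≤ n)]
    congr 1
    refine Finset.sum_congr rfl (fun j hj => ?_)
    have h1 := (Finset.mem_filter.mp hj).2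
    omega
  have hqle : q ≤ ∑ j ∈ LC, c j := by
    calc q ≤ ∑ i : Fin n, ∑ j ∈ LC, e i j :=
          Finset.sum_le_sum_of_subset (Finset.filter_subset _ _)
      _ = ∑ j ∈ LC, ∑ i : Fin n, e i j := Finset.sum_comm
      _ = ∑ j ∈ LC, c j := rfl
  have hrlhle : rlh ≤ p := by
    refine Finset.sum_le_sum (fun i _ => ?_)
    calc ∑ j ∈ HC, e i j ≤ ∑ j : Fin m, e i j :=
          Finset.sum_le_sum_of_subset (Finset.filter_subset _ _)
      _ = r i := rfl
  have hu : ∑ i ∈ HR, r i = q + x := by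
    rw [hq, hx, ← Finset.sum_add_distrib]
    exact Finset.sum_congr rfl (fun i _ => hsplitr i)
  have hv : ∑ j ∈ HC, c j = x + rlh := by
    have hsc : ∀ j, c j = (∑ i ∈ HR, e i j) + ∑ i ∈ LR, e i j := fun j => by
      have h0 : c j = ∑ i : Fin n, e i j := rfl
      rw [h0, ← Finset.sum_filter_add_sum_filter_not Finset.univ (fun i => 2 * r i ≤ m)
        (fun i => e i j)]
      exact add_comm _ _
    rw [Finset.sum_congr rfl (fun j _ => hsc j), Finset.sum_add_distrib,
      hx, hrlh, Finset.sum_comm (s := HC) (t := HR), Finset.sum_comm (s := HC) (t := LR)]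
  have hA1 : p + a * m ≤ VC + (q + x) := by
    rw [← hu, hVCsplit, add_assoc]
    refine Nat.add_le_add_left ?_ p
    rw [← Finset.sum_add_distrib, ha]
    calc HR.card * m = ∑ _i ∈ HR, m := by rw [Finset.sum_const, smul_eq_mul]
      _ ≤ ∑ i ∈ HR, (min (r i) (m - r i) + r i) := by
          refine Finset.sum_le_sum (fun i hi => ?_)
          have h1 := (Finset.mem_filter.mp hi).2
          have h2 := hrm i
          omega
  have hA2 : q + b * n ≤ VR + (x + rlh) := by
    rw [← hv, hVRsplit]
    have step : b * n ≤ (∑ j ∈ HC, min (c j) (n - c j)) + ∑ j ∈ HC, c j := by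
      rw [← Finset.sum_add_distrib, hb]
      calc HC.card * n = ∑ _j ∈ HC, n := by rw [Finset.sum_const, smul_eq_mul]
        _ ≤ ∑ j ∈ HC, (min (c j) (n - c j) + c j) := by
            refine Finset.sum_le_sum (fun j hj => ?_)
            have h1 := (Finset.mem_filter.mp hj).2
            have h2 := hcn j
            omega
    have := add_le_add hqle step
    linarith
  have hxab : x ≤ a * b := by
    calc x ≤ ∑ _i ∈ HR, ∑ _j ∈ HC, 1 :=
          Finset.sum_le_sum (fun i _ => Finset.sum_le_sum (fun j _ => hele i j))
      _ = a * b := by simp [ha, hb, Finset.sum_const, mul_comm]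
  have hpVC : p ≤ VC := by rw [hVCsplit]; omega
  have hqVR : q ≤ VR := le_trans hqle (by rw [hVRsplit]; omega)
  have hABx : 2 * o * x ≤ (a * m) * (b * n) := by
    have h1 : x * (2 * o) ≤ (a * b) * (n * m) := Nat.mul_le_mul hxab hhalf
    calc 2 * o * x = x * (2 * o) := by ring
      _ ≤ (a * b) * (n * m) := h1
      _ = (a * m) * (b * n) := by ring
  have hW2x : ((a:ℝ) * m + (b:ℝ) * n) ≤ ((VR:ℝ) + VC) + 2 * x := by
    have c1 : (p:ℝ) + (a:ℝ) * m ≤ (VC:ℝ) + ((q:ℝ) + x) := by exact_mod_cast hA1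
    have c2 : (q:ℝ) + (b:ℝ) * n ≤ (VR:ℝ) + ((x:ℝ) + rlh) := by exact_mod_cast hA2
    have c3 : (rlh:ℝ) ≤ p := by exact_mod_cast hrlhle
    linarith
  have hKr : 8 * (o:ℝ) * x ≤ (((VR:ℝ) + VC) + 2 * x)^2 := by
    have hABr : 2 * (o:ℝ) * x ≤ ((a:ℝ) * m) * ((b:ℝ) * n) := by exact_mod_cast hABx
    have hABnn : (0:ℝ) ≤ (a:ℝ) * m + (b:ℝ) * n :=
      add_nonneg (mul_nonneg (Nat.cast_nonneg a) (Nat.cast_nonneg m)) (mul_nonneg (Nat.cast_nonneg b) (Nat.cast_nonneg n))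
    have hsq := mul_self_le_mul_self hABnn hW2x
    nlinarith [sq_nonneg ((a:ℝ) * m - (b:ℝ) * n)]
  have h2r : (o:ℝ) ≤ ((VR:ℝ) + VC) + x := by
    have h0 : (o:ℝ) = (p:ℝ) + ((q:ℝ) + x) := by exact_mod_cast hopqx
    have c1 : (p:ℝ) ≤ VC := by exact_mod_cast hpVC
    have c2 : (q:ℝ) ≤ VR := by exact_mod_cast hqVR
    linarith
  have h4r : (x:ℝ) ≤ o := by
    have : x ≤ o := by omega
    exact_mod_cast this
  have hfin := core_ineq (o:ℝ) ((VR:ℝ) + VC) (x:ℝ) (Nat.cast_nonneg o)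
    (add_nonneg (Nat.cast_nonneg VR) (Nat.cast_nonneg VC)) (Nat.cast_nonneg x) hKr h2r h4r
  linarith

open Finset in
/-- For a 0-1 matrix with at most half ones, the number of ones is at most
((1+√2)/2)(V_R(Y) + V_C(Y)). -/
theorem ones_le_ratio_row_col (n m : ℕ) (Y : Fin n → Fin m → Bool)
    (o : ℕ)
    (ho : o = (Finset.univ.filter (fun p : Fin n × Fin m => Y p.1 p.2 = true)).card)
    (hhalf : 2 * o ≤ n * m) :
    (o : ℝ) ≤ (1 + Real.sqrt 2) / 2 *
      (((∑ j : Fin m,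
          min ((Finset.univ.filter (fun i : Fin n => Y i j = true)).card)
            (n - (Finset.univ.filter (fun i : Fin n => Y i j = true)).card) : ℕ) : ℝ) +
        ((∑ i : Fin n,
          min ((Finset.univ.filter (fun j : Fin m => Y i j = true)).card)
            (m - (Finset.univ.filter (fun j : Fin m => Y i j = true)).card) : ℕ) : ℝ)) := by
  classical
  have hoe : o = ∑ i, ∑ j, (if Y i j = true then (1:ℕ) else 0) := by
    rw [ho, Finset.card_filter, Fintype.sum_prod_type]
  have key := aux_main n m (fun i j => if Y i j = true then (1:ℕ) else 0)
    (fun i j => by split <;> omega) o hoe hhalf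
  simp only [Finset.card_filter] at *
  linarith [key]
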